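/- Let T > 0, let σ ∈ C²([0,1]) be positive, let Q ∈ C¹([0,T]) be positive, set J(t) = ∫₀^t σ(s)²/2 ds for t ∈ [0,1], and let q : [0, J(1)] → (0,∞) be defined by q(J(s)) = 2·Q(s·T)/σ(s)² for s ∈ [0,1]. If w : [0,J(1)] × [0,∞) → ℝ is a classical solution of ∂_τ w(τ,ξ) = T^{1/3}·(∂_ξ² w(τ,ξ) − q(τ)·ξ·w(τ,ξ)), then the function u : [0,T] × [0,∞) → ℝ defined by u(t,x) = w( J(t/T), T^{-1/3}·x ) · exp( T^{1/3}·α₁·∫₀^{J(t/T)} q(s)^{2/3} ds ) is a classical solution of ∂_t u(t,x) = (σ(t/T)²/2)·∂_x² u(t,x) + ( −T^{-1}·Q(t)·x + T^{-2/3}·α₁·Q(t)^{2/3}·(σ(t/T)²/2)^{1/3} )·u(t,x). Moreover, if w satisfies the Dirichlet boundary condition w(τ,0) = 0 for all τ, then so does u. -/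

import Mathlib

open MeasureTheory Filter Set
open Topology

/-- The Airy function of the first kind, defined as
`Ai(x) = (1/π) · lim_{R→∞} ∫₀^R cos(t³/3 + x·t) dt`. -/
noncomputable def Ai (x : ℝ) : ℝ :=
  (1 / Real.pi) *
    limUnder Filter.atTop (fun R : ℝ => ∫ t in (0:ℝ)..R, Real.cos (t ^ 3 / 3 + x * t))

/-- Change of variables between the canonical Airy-type PDE
`∂_τ w = T^{1/3}(∂_ξ² w − q(τ)·ξ·w)` on `[0,J(1)]×[0,∞)` and the PDE
`∂_t u = (σ(t/T)²/2)·∂_x² u + (−T⁻¹·Q(t)·x + T^{−2/3}·α₁·Q(t)^{2/3}·(σ(t/T)²/2)^{1/3})·u`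
on `[0,T]×[0,∞)`, where `J(t) = ∫₀^t σ(s)²/2 ds`, `q(J(s)) = 2·Q(s·T)/σ(s)²`, `−α₁` is the
largest zero of `Ai`, and
`u(t,x) = w(J(t/T), T^{−1/3}·x)·exp(T^{1/3}·α₁·∫₀^{J(t/T)} q(s)^{2/3} ds)`.
Classical solutions are continuous on the closed rectangle, `C¹` in time and `C²` in space in
the interior, and satisfy the equation pointwise; moreover the Dirichlet boundary condition is
transported from `w` to `u`. -/
theorem airy_pde_change_of_variables
    (α₁ : ℝ) (hα₁ : 0 < α₁) (hzero : Ai (-α₁) = 0)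
    (hlargest : ∀ x : ℝ, -α₁ < x → Ai x ≠ 0)
    (T : ℝ) (hT : 0 < T)
    (σ : ℝ → ℝ) (hσ : ContDiffOn ℝ 2 σ (Set.Icc 0 1))
    (hσpos : ∀ s ∈ Set.Icc (0:ℝ) 1, 0 < σ s)
    (Q : ℝ → ℝ) (hQ : ContDiffOn ℝ 1 Q (Set.Icc 0 T))
    (hQpos : ∀ t ∈ Set.Icc (0:ℝ) T, 0 < Q t)
    (J : ℝ → ℝ) (hJ : ∀ t : ℝ, J t = ∫ s in (0:ℝ)..t, σ s ^ 2 / 2)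
    (q : ℝ → ℝ) (hqdef : ∀ s ∈ Set.Icc (0:ℝ) 1, q (J s) = 2 * Q (s * T) / σ s ^ 2)
    (w : ℝ → ℝ → ℝ)
    -- `w` is a classical solution of `∂_τ w = T^{1/3}(∂_ξ² w − q(τ)·ξ·w)`:
    (hw_cont : ContinuousOn (fun p : ℝ × ℝ => w p.1 p.2) (Set.Icc 0 (J 1) ×ˢ Set.Ici 0))
    (hw_space : ∀ τ ∈ Set.Ioo (0:ℝ) (J 1), ∀ ξ ∈ Set.Ioi (0:ℝ), ContDiffAt ℝ 2 (w τ) ξ)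
    (hw_pde : ∀ τ ∈ Set.Ioo (0:ℝ) (J 1), ∀ ξ ∈ Set.Ioi (0:ℝ),
      HasDerivAt (fun s => w s ξ)
        (T ^ ((1:ℝ)/3) * (deriv (deriv (w τ)) ξ - q τ * ξ * w τ ξ)) τ)
    (u : ℝ → ℝ → ℝ)
    (hu : ∀ t x : ℝ, u t x =
      w (J (t / T)) (T ^ (-(1:ℝ)/3) * x) *
        Real.exp (T ^ ((1:ℝ)/3) * α₁ * ∫ s in (0:ℝ)..(J (t / T)), q s ^ ((2:ℝ)/3))) :
    -- `u` is a classical solution of the transformed PDE: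
    ContinuousOn (fun p : ℝ × ℝ => u p.1 p.2) (Set.Icc 0 T ×ˢ Set.Ici 0) ∧
    (∀ t ∈ Set.Ioo (0:ℝ) T, ∀ x ∈ Set.Ioi (0:ℝ),
      ContDiffAt ℝ 2 (u t) x ∧
      HasDerivAt (fun s => u s x)
        (σ (t / T) ^ 2 / 2 * deriv (deriv (u t)) x
          + (-(T⁻¹ * Q t * x)
              + T ^ (-(2:ℝ)/3) * α₁ * Q t ^ ((2:ℝ)/3) * (σ (t / T) ^ 2 / 2) ^ ((1:ℝ)/3))
            * u t x) t) ∧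
    ((∀ τ : ℝ, w τ 0 = 0) → ∀ t : ℝ, u t 0 = 0) := by
  have hT' : T ≠ 0 := hT.ne'
  have hσc : ContinuousOn σ (Icc 0 1) := hσ.continuousOn
  have hfc : ContinuousOn (fun s => σ s ^ 2 / 2) (Icc 0 1) := (hσc.pow 2).div_const 2
  have hint : ∀ a b : ℝ, a ∈ Icc (0:ℝ) 1 → b ∈ Icc (0:ℝ) 1 →
      IntervalIntegrable (fun s => σ s ^ 2 / 2) volume a b := fun a b ha hb =>
    (hfc.mono (uIcc_subset_Icc ha hb)).intervalIntegrable
  have hJdiff : ∀ a b : ℝ, a ∈ Icc (0:ℝ) 1 → b ∈ Icc (0:ℝ) 1 →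
      J b - J a = ∫ s in a..b, σ s ^ 2 / 2 := by
    intro a b ha hb
    have := intervalIntegral.integral_add_adjacent_intervals
      (hint 0 a (left_mem_Icc.2 zero_le_one) ha) (hint a b ha hb)
    rw [hJ a, hJ b, ← this]; ring
  have hJ0 : J 0 = 0 := by rw [hJ]; simp
  have hJle : ∀ a b : ℝ, a ∈ Icc (0:ℝ) 1 → b ∈ Icc (0:ℝ) 1 → a ≤ b → J a ≤ J b := by
    intro a b ha hb hab
    have h0 : 0 ≤ ∫ s in a..b, σ s ^ 2 / 2 :=
      intervalIntegral.integral_nonneg hab (fun s _ => by positivity)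
    have := hJdiff a b ha hb; linarith
  have hJlt : ∀ a b : ℝ, a ∈ Icc (0:ℝ) 1 → b ∈ Icc (0:ℝ) 1 → a < b → J a < J b := by
    intro a b ha hb hab
    have h0 : 0 < ∫ s in a..b, σ s ^ 2 / 2 := by
      apply intervalIntegral.intervalIntegral_pos_of_pos_on (hint a b ha hb) _ hab
      intro s hs
      have hs' : s ∈ Icc (0:ℝ) 1 := ⟨le_trans ha.1 hs.1.le, le_trans hs.2.le hb.2⟩
      have := hσpos s hs'; positivity
    have := hJdiff a b ha hb; linarith
  have hJ1pos : 0 < J 1 := by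
    have := hJlt 0 1 (left_mem_Icc.2 zero_le_one) (right_mem_Icc.2 zero_le_one) one_pos
    rwa [hJ0] at this
  have hJmem : ∀ r ∈ Icc (0:ℝ) 1, J r ∈ Icc 0 (J 1) := by
    intro r hr
    constructor
    · have := hJle 0 r (left_mem_Icc.2 zero_le_one) hr hr.1; rwa [hJ0] at this
    · exact hJle r 1 hr (right_mem_Icc.2 zero_le_one) hr.2
  have hJmemo : ∀ r ∈ Ioo (0:ℝ) 1, J r ∈ Ioo 0 (J 1) := by
    intro r hr
    constructor
    · have := hJlt 0 r (left_mem_Icc.2 zero_le_one) ⟨hr.1.le, hr.2.le⟩ hr.1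
      rwa [hJ0] at this
    · exact hJlt r 1 ⟨hr.1.le, hr.2.le⟩ (right_mem_Icc.2 zero_le_one) hr.2
  have hJcont : ContinuousOn J (Icc 0 1) := by
    have h1 : IntegrableOn (fun s => σ s ^ 2 / 2) (uIcc 0 1) volume := by
      rw [uIcc_of_le zero_le_one]; exact hfc.integrableOn_Icc
    have := intervalIntegral.continuousOn_primitive_interval (μ := volume) h1
    rw [uIcc_of_le zero_le_one] at this
    exact this.congr (fun r _ => hJ r)
  have hJderiv : ∀ r ∈ Ioo (0:ℝ) 1, HasDerivAt J (σ r ^ 2 / 2) r := by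
    intro r hr
    have h1 : IntervalIntegrable (fun s => σ s ^ 2 / 2) volume 0 r :=
      hint 0 r (left_mem_Icc.2 zero_le_one) ⟨hr.1.le, hr.2.le⟩
    have hmeas : StronglyMeasurableAtFilter (fun s => σ s ^ 2 / 2) (𝓝 r) volume :=
      ContinuousOn.stronglyMeasurableAtFilter isOpen_Ioo (hfc.mono Ioo_subset_Icc_self) r hr
    have hca : ContinuousAt (fun s => σ s ^ 2 / 2) r :=
      hfc.continuousAt (Icc_mem_nhds hr.1 hr.2)
    have hd := intervalIntegral.integral_hasDerivAt_right h1 hmeas hca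
    have hfun : (fun y => ∫ s in (0:ℝ)..y, σ s ^ 2 / 2) = J := (funext hJ).symm
    rwa [hfun] at hd
  -- inverse of J and continuity of q
  have hJsm : StrictMonoOn J (Icc 0 1) := fun a ha b hb hab => hJlt a b ha hb hab
  have hbij : BijOn J (Icc 0 1) (Icc 0 (J 1)) := by
    refine ⟨fun r hr => hJmem r hr, hJsm.injOn, ?_⟩
    have h := intermediate_value_Icc zero_le_one hJcont
    rw [hJ0] at h; exact h
  have hecont : Continuous (fun s : Icc (0:ℝ) 1 => (Set.BijOn.equiv J hbij) s) :=
    Continuous.subtype_mk hJcont.restrict _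
  let homeo : Icc (0:ℝ) 1 ≃ₜ Icc 0 (J 1) := Continuous.homeoOfEquivCompactToT2 hecont
  set ψ : Icc 0 (J 1) → ℝ := fun y => (homeo.symm y : ℝ) with hψdef
  have hψcont : Continuous ψ := continuous_subtype_val.comp homeo.symm.continuous
  have hψmem : ∀ y, ψ y ∈ Icc (0:ℝ) 1 := fun y => (homeo.symm y).2
  have hψJ : ∀ y : Icc 0 (J 1), J (ψ y) = y := by
    intro y
    have := homeo.apply_symm_apply y
    exact congrArg Subtype.val this
  have hqcont : ContinuousOn q (Icc 0 (J 1)) := by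
    rw [continuousOn_iff_continuous_restrict]
    change Continuous ((Icc 0 (J 1)).restrict q)
    have heq : (Icc 0 (J 1)).restrict q = fun y => 2 * Q (ψ y * T) / σ (ψ y) ^ 2 := by
      funext y
      have h1 := hqdef (ψ y) (hψmem y)
      rw [hψJ y] at h1
      exact h1
    rw [heq]
    have hmemT : ∀ y, ψ y * T ∈ Icc (0:ℝ) T := by
      intro y
      exact ⟨mul_nonneg (hψmem y).1 hT.le, by nlinarith [(hψmem y).2, hT]⟩
    have hgc : ContinuousOn (fun z : ℝ => 2 * Q (z * T) / σ z ^ 2) (Icc 0 1) :=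
      (continuousOn_const.mul (hQ.continuousOn.comp
        ((continuous_id.mul continuous_const).continuousOn)
        (fun z hz => ⟨by simpa using mul_nonneg hz.1 hT.le,
          by simpa using (by nlinarith [hz.2, hT] : z * T ≤ T)⟩))).div
        (hσc.pow 2) (fun z hz => pow_ne_zero 2 (hσpos z hz).ne')
    exact hgc.comp_continuous hψcont hψmem
  have hq23cont : ContinuousOn (fun y => q y ^ ((2:ℝ)/3)) (Icc 0 (J 1)) :=
    hqcont.rpow_const (fun y _ => Or.inr (by norm_num))
  set F : ℝ → ℝ := fun y => ∫ s in (0:ℝ)..y, q s ^ ((2:ℝ)/3) with hFdef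
  have hFcont : ContinuousOn F (Icc 0 (J 1)) := by
    have h1 : IntegrableOn (fun y => q y ^ ((2:ℝ)/3)) (uIcc 0 (J 1)) volume := by
      rw [uIcc_of_le hJ1pos.le]; exact hq23cont.integrableOn_Icc
    have h2 := intervalIntegral.continuousOn_primitive_interval (μ := volume) h1
    rwa [uIcc_of_le hJ1pos.le] at h2
  have hFderiv : ∀ y ∈ Ioo (0:ℝ) (J 1), HasDerivAt F (q y ^ ((2:ℝ)/3)) y := by
    intro y hy
    have hsub : uIcc (0:ℝ) y ⊆ Icc 0 (J 1) := by
      rw [uIcc_of_le hy.1.le]; exact Icc_subset_Icc le_rfl hy.2.le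
    have h1 : IntervalIntegrable (fun s => q s ^ ((2:ℝ)/3)) volume 0 y :=
      (hq23cont.mono hsub).intervalIntegrable
    have hmeas := ContinuousOn.stronglyMeasurableAtFilter (μ := volume) isOpen_Ioo
      (hq23cont.mono Ioo_subset_Icc_self) y hy
    have hca : ContinuousAt (fun s => q s ^ ((2:ℝ)/3)) y :=
      hq23cont.continuousAt (Icc_mem_nhds hy.1 hy.2)
    exact intervalIntegral.integral_hasDerivAt_right h1 hmeas hca
  have hcpos : (0:ℝ) < T ^ (-(1:ℝ)/3) := Real.rpow_pos_of_pos hT _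
  have hmapIcc : ∀ t ∈ Icc (0:ℝ) T, t / T ∈ Icc (0:ℝ) 1 := fun t ht =>
    ⟨div_nonneg ht.1 hT.le, (div_le_one hT).2 ht.2⟩
  have hmcont : ContinuousOn (fun t => J (t / T)) (Icc 0 T) :=
    hJcont.comp (continuous_id.div_const T).continuousOn hmapIcc
  refine ⟨?_, ?_, ?_⟩
  · -- continuity
    have hwp : ContinuousOn (fun p : ℝ × ℝ => w (J (p.1 / T)) (T ^ (-(1:ℝ)/3) * p.2))
        (Icc 0 T ×ˢ Ici 0) := by
      have hpair : ContinuousOn (fun p : ℝ × ℝ => (J (p.1 / T), T ^ (-(1:ℝ)/3) * p.2))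
          (Icc 0 T ×ˢ Ici 0) :=
        (hmcont.comp continuousOn_fst
          (fun p (hp : p ∈ Icc 0 T ×ˢ Ici (0:ℝ)) => hp.1)).prodMk
          (continuous_const.mul continuous_snd).continuousOn
      have hmaps : MapsTo (fun p : ℝ × ℝ => (J (p.1 / T), T ^ (-(1:ℝ)/3) * p.2))
          (Icc 0 T ×ˢ Ici 0) (Icc 0 (J 1) ×ˢ Ici 0) := fun p hp =>
        ⟨hJmem _ (hmapIcc _ hp.1), mul_nonneg hcpos.le hp.2⟩
      exact hw_cont.comp hpair hmaps
    have hEp : ContinuousOn (fun p : ℝ × ℝ =>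
        Real.exp (T ^ ((1:ℝ)/3) * α₁ * F (J (p.1 / T)))) (Icc 0 T ×ˢ Ici 0) :=
      Real.continuous_exp.comp_continuousOn (continuousOn_const.mul
        ((hFcont.comp hmcont (fun t ht => hJmem _ (hmapIcc t ht))).comp
          continuousOn_fst (fun p hp => hp.1)))
    exact (hwp.mul hEp).congr (fun p hp => hu p.1 p.2)
  · -- PDE
    intro t ht x hx
    have hr : t / T ∈ Ioo (0:ℝ) 1 := ⟨div_pos ht.1 hT, (div_lt_one hT).2 ht.2⟩
    set r := t / T with hrdef
    have hτ : J r ∈ Ioo 0 (J 1) := hJmemo r hr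
    set τ := J r with hτdef
    set c := T ^ (-(1:ℝ)/3) with hcdef
    have hξ : c * x ∈ Ioi (0:ℝ) := mul_pos hcpos hx
    set ξ := c * x with hξdef
    set E := Real.exp (T ^ ((1:ℝ)/3) * α₁ * F τ) with hEdef
    have hut : u t = fun x' => w τ (c * x') * E := funext fun x' => hu t x'
    have hwc : ContDiffAt ℝ 2 (w τ) ξ := hw_space τ hτ ξ hξ
    have hlin : ContDiffAt ℝ 2 (fun x' : ℝ => c * x') x :=
      (contDiff_const.mul contDiff_id).contDiffAt
    have hcd : ContDiffAt ℝ 2 (u t) x := by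
      rw [hut]; exact (hwc.comp x hlin).mul contDiffAt_const
    refine ⟨hcd, ?_⟩
    -- second space derivative
    obtain ⟨U, hU_mem, hUcd⟩ := hwc.contDiffOn le_rfl (by simp)
    obtain ⟨V, hVU, hVopen, hξV⟩ := mem_nhds_iff.mp hU_mem
    have hVcd : ContDiffOn ℝ 2 (w τ) V := hUcd.mono hVU
    have hd1 : ContDiffOn ℝ 1 (deriv (w τ)) V := hVcd.deriv_of_isOpen hVopen (by norm_num)
    have hdiff2 : DifferentiableAt ℝ (deriv (w τ)) ξ :=
      (hd1.differentiableOn (by norm_num)).differentiableAt (hVopen.mem_nhds hξV)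
    have hxV : ∀ᶠ x' in 𝓝 x, c * x' ∈ V := by
      have htend : Tendsto (fun x' : ℝ => c * x') (𝓝 x) (𝓝 ξ) :=
        ((continuous_const.mul continuous_id).tendsto x)
      exact htend.eventually_mem (hVopen.mem_nhds hξV)
    have hderiv1 : deriv (u t) =ᶠ[𝓝 x] fun x' => c * deriv (w τ) (c * x') * E := by
      filter_upwards [hxV] with x' hx'
      have hdwa : DifferentiableAt ℝ (w τ) (c * x') :=
        (hVcd.differentiableOn (by norm_num)).differentiableAt (hVopen.mem_nhds hx')
      have hcomp : HasDerivAt (fun y : ℝ => w τ (c * y)) (deriv (w τ) (c * x') * c) x' :=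
        HasDerivAt.comp x' hdwa.hasDerivAt (by simpa using (hasDerivAt_id x').const_mul c)
      have hder : HasDerivAt (u t) (deriv (w τ) (c * x') * c * E) x' := by
        rw [hut]; exact hcomp.mul_const E
      rw [hder.deriv]; ring
    have hD2 : deriv (deriv (u t)) x = c ^ 2 * deriv (deriv (w τ)) ξ * E := by
      have hinner : HasDerivAt (fun y : ℝ => deriv (w τ) (c * y))
          (deriv (deriv (w τ)) ξ * c) x :=
        HasDerivAt.comp x hdiff2.hasDerivAt
          (by simpa using (hasDerivAt_id x).const_mul c : HasDerivAt (fun y : ℝ => c * y) c x)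
      have h2 : HasDerivAt (fun x' => c * deriv (w τ) (c * x') * E)
          (c * (deriv (deriv (w τ)) ξ * c) * E) x := (hinner.const_mul c).mul_const E
      have h3 := h2.congr_of_eventuallyEq hderiv1
      rw [h3.deriv]; ring
    -- time derivative
    have hm : HasDerivAt (fun s : ℝ => J (s / T)) (σ r ^ 2 / 2 * (1 / T)) t := by
      have hinner : HasDerivAt (fun s : ℝ => s / T) (1 / T) t := by
        simpa using (hasDerivAt_id t).div_const T
      exact HasDerivAt.comp t (hJderiv r hr) hinner
    have hwd := hw_pde τ hτ ξ hξ
    have hFd : HasDerivAt F (q τ ^ ((2:ℝ)/3)) τ := hFderiv τ hτ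
    have hexp : HasDerivAt (fun τ' => Real.exp (T ^ ((1:ℝ)/3) * α₁ * F τ'))
        (Real.exp (T ^ ((1:ℝ)/3) * α₁ * F τ) * (T ^ ((1:ℝ)/3) * α₁ * q τ ^ ((2:ℝ)/3))) τ :=
      (hFd.const_mul (T ^ ((1:ℝ)/3) * α₁)).exp
    have hgd : HasDerivAt (fun τ' => w τ' ξ * Real.exp (T ^ ((1:ℝ)/3) * α₁ * F τ'))
        (T ^ ((1:ℝ)/3) * (deriv (deriv (w τ)) ξ - q τ * ξ * w τ ξ) * E
          + w τ ξ * (E * (T ^ ((1:ℝ)/3) * α₁ * q τ ^ ((2:ℝ)/3)))) τ := hwd.mul hexp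
    have hcomp2 : HasDerivAt
        (fun s => w (J (s / T)) ξ * Real.exp (T ^ ((1:ℝ)/3) * α₁ * F (J (s / T))))
        ((T ^ ((1:ℝ)/3) * (deriv (deriv (w τ)) ξ - q τ * ξ * w τ ξ) * E
          + w τ ξ * (E * (T ^ ((1:ℝ)/3) * α₁ * q τ ^ ((2:ℝ)/3)))) * (σ r ^ 2 / 2 * (1 / T))) t :=
      HasDerivAt.comp (h₂ := fun τ' => w τ' ξ * Real.exp (T ^ ((1:ℝ)/3) * α₁ * F τ')) t hgd hm
    have hus : (fun s => u s x)
        = fun s => w (J (s / T)) ξ * Real.exp (T ^ ((1:ℝ)/3) * α₁ * F (J (s / T))) :=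
      funext fun s => hu s x
    have hval := hcomp2
    rw [← hus] at hval
    convert hval using 1
    -- scalar algebra
    have huE : u t x = w τ ξ * E := by rw [hut]
    rw [hD2, huE]
    have hσr : 0 < σ r := hσpos r ⟨hr.1.le, hr.2.le⟩
    have hA : (0:ℝ) < σ r ^ 2 / 2 := by positivity
    have hQt : (0:ℝ) < Q t := hQpos t ⟨ht.1.le, ht.2.le⟩
    have hq_τ : q τ * (σ r ^ 2 / 2) = Q t := by
      have h1 := hqdef r ⟨hr.1.le, hr.2.le⟩
      rw [← hτdef] at h1
      have h2 : r * T = t := by rw [hrdef]; field_simp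
      rw [h2] at h1
      rw [h1]; field_simp
    have hq23A : q τ ^ ((2:ℝ)/3) * (σ r ^ 2 / 2)
        = Q t ^ ((2:ℝ)/3) * (σ r ^ 2 / 2) ^ ((1:ℝ)/3) := by
      have hqτv : q τ = Q t / (σ r ^ 2 / 2) := by
        rw [← hq_τ]; field_simp
      have h1 : (σ r ^ 2 / 2) ^ ((1:ℝ)/3) * (σ r ^ 2 / 2) ^ ((2:ℝ)/3) = σ r ^ 2 / 2 := by
        rw [← Real.rpow_add hA]; norm_num
      rw [hqτv, Real.div_rpow hQt.le hA.le, div_mul_eq_mul_div,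
        div_eq_iff (ne_of_gt (Real.rpow_pos_of_pos hA _))]
      linear_combination (-(Q t ^ ((2:ℝ)/3))) * h1
    set P := T ^ ((1:ℝ)/3) with hPdef
    have hPpos : 0 < P := Real.rpow_pos_of_pos hT _
    have hP3 : P ^ 3 = T := by
      rw [hPdef, ← Real.rpow_natCast (T ^ ((1:ℝ)/3)) 3, ← Real.rpow_mul hT.le]; norm_num
    have hcP : c = P⁻¹ := by
      rw [hcdef, hPdef, ← Real.rpow_neg hT.le]; norm_num
    have hT23 : T ^ (-(2:ℝ)/3) = (P ^ 2)⁻¹ := by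
      rw [hPdef, ← Real.rpow_natCast (T ^ ((1:ℝ)/3)) 2, ← Real.rpow_mul hT.le,
        ← Real.rpow_neg hT.le]; norm_num
    have hTinv : T⁻¹ = (P ^ 3)⁻¹ := by rw [hP3]
    have h1T : 1 / T = (P ^ 3)⁻¹ := by rw [hP3]; ring
    rw [hcP, hT23, hTinv, h1T, hξdef, hcP]
    field_simp
    linear_combination (2 * x * w τ (x / P) * E) * hq_τ
      + (-(2 * α₁ * w τ (x / P) * E * P)) * hq23A
  · -- Dirichlet
    intro hD t
    rw [hu t 0, mul_zero, hD]
    ring
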